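/- Funk parabola of type 4: let y₀ ∈ (−1,1), F = (f₀,g₀) ∈ B², and let P = (x,y) ∈ B² with y ≠ y₀ and P ≠ F. Put ȳ = 1 + sgn(y₀−y)·y, σ₄ = 1 + sgn(y₀−y)·y₀, A = −2σ₄·g₀·sgn(y₀−y), B = −2σ₄·f₀, C = 2σ₄·(1 + sgn(y₀−y)·g₀), D = σ₄²·(f₀² + g₀² − 1). Then ln ρ(y₀,y) = d_F(P,F) holds if and only if ȳ⁴ + x²·ȳ² − 2ȳ³ + A·ȳ² + B·x·ȳ + C·ȳ + D = 0. -/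

import Mathlib

/-- The Funk distance on the open unit ball of Euclidean n-space:
`d_F(P,Q) = ln((√k − ⟨P, Q−P⟩)/(√k − ⟨Q, Q−P⟩))` with
`k = ⟨P, Q−P⟩² + (1 − ‖P‖²)‖Q−P‖²`. -/
noncomputable def funkDist {n : ℕ} (P Q : EuclideanSpace ℝ (Fin n)) : ℝ :=
  Real.log
    ((Real.sqrt ((inner ℝ P (Q - P) : ℝ) ^ 2 + (1 - ‖P‖ ^ 2) * ‖Q - P‖ ^ 2) - (inner ℝ P (Q - P) : ℝ)) /
     (Real.sqrt ((inner ℝ P (Q - P) : ℝ) ^ 2 + (1 - ‖P‖ ^ 2) * ‖Q - P‖ ^ 2) - (inner ℝ Q (Q - P) : ℝ)))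

/-- `ρ(ε,η) = (1 + sgn(ε−η)·ε)/(1 + sgn(ε−η)·η)`. -/
noncomputable def rho (ε η : ℝ) : ℝ :=
  (1 + Real.sign (ε - η) * ε) / (1 + Real.sign (ε - η) * η)

/-- The point `(a,b)` of the Euclidean plane. -/
def pt (a b : ℝ) : EuclideanSpace ℝ (Fin 2) := WithLp.toLp 2 ![a, b]

lemma pt_sub (a b c d : ℝ) : pt a b - pt c d = pt (a - c) (b - d) := by
  ext i; fin_cases i <;> simp [pt]

lemma pt_inner (a b c d : ℝ) : (inner ℝ (pt a b) (pt c d) : ℝ) = a * c + b * d := by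
  simp [pt, PiLp.inner_apply, Fin.sum_univ_two, mul_comm]

lemma pt_norm_sq (a b : ℝ) : ‖pt a b‖ ^ 2 = a ^ 2 + b ^ 2 := by
  rw [← real_inner_self_eq_norm_sq, pt_inner]; ring

lemma funk_core (σ₄ Ybar t m k Q : ℝ) (hYpos : 0 < Ybar) (hσY : Ybar < σ₄)
    (hmpos : 0 < m) (hkt : 0 < k - t ^ 2) (hku : 0 < k - (t + m) ^ 2)
    (hEQ : (σ₄ * (t + m) - Ybar * t) ^ 2 - (σ₄ - Ybar) ^ 2 * k = m * Q) :
    Real.log (σ₄ / Ybar) = Real.log ((Real.sqrt k - t) / (Real.sqrt k - (t + m))) ↔ Q = 0 := by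
  have hσpos : 0 < σ₄ := lt_trans hYpos hσY
  have hknn : 0 ≤ k := by nlinarith [sq_nonneg t]
  set r := Real.sqrt k with hr
  have hr2 : r ^ 2 = k := Real.sq_sqrt hknn
  have hrnn : 0 ≤ r := Real.sqrt_nonneg k
  have hrt : t < r := by nlinarith
  have hrt' : -t < r := by nlinarith
  have hru : t + m < r := by nlinarith
  have hrupos : 0 < r - (t + m) := by linarith
  have hrtpos : 0 < r - t := by linarith
  constructor
  · intro h
    have h1 : σ₄ / Ybar = (r - t) / (r - (t + m)) :=
      Real.log_injOn_pos (Set.mem_Ioi.mpr (by positivity))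
        (Set.mem_Ioi.mpr (by positivity)) h
    have h2 : σ₄ * (r - (t + m)) = (r - t) * Ybar :=
      (div_eq_div_iff (ne_of_gt hYpos) (ne_of_gt hrupos)).mp h1
    have h4 : (σ₄ - Ybar) * r = σ₄ * (t + m) - Ybar * t := by linear_combination h2
    have h5 : m * Q = 0 := by
      rw [← hEQ]
      linear_combination (-((σ₄ - Ybar) * r + (σ₄ * (t + m) - Ybar * t))) * h4
        + (σ₄ - Ybar) ^ 2 * hr2
    exact (mul_eq_zero.mp h5).resolve_left (ne_of_gt hmpos)
  · intro hQ
    have h7 : (σ₄ * (t + m) - Ybar * t - (σ₄ - Ybar) * r)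
        * (σ₄ * (t + m) - Ybar * t + (σ₄ - Ybar) * r) = 0 := by
      linear_combination hEQ + m * hQ - (σ₄ - Ybar) ^ 2 * hr2
    rcases mul_eq_zero.mp h7 with h8 | h8
    · have h9 : σ₄ / Ybar = (r - t) / (r - (t + m)) := by
        rw [div_eq_div_iff (ne_of_gt hYpos) (ne_of_gt hrupos)]
        linear_combination (-1 : ℝ) * h8
      rw [h9]
    · exfalso
      have h10 : σ₄ * ((t + m) + r) = Ybar * (t + r) := by linear_combination h8
      nlinarith [mul_pos hσpos hmpos, mul_pos (sub_pos.mpr hσY)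
        (show (0:ℝ) < t + r by linarith)]

/-- Type-4 Funk parabola: `d_F(s,P) = ln ρ(y₀,y) = d_F(P,F)` iff the quartic
`ȳ⁴ + x²ȳ² − 2ȳ³ + Aȳ² + Bxȳ + Cȳ + D = 0` holds, where `ȳ = 1 + sgn(y₀−y)·y`. -/
theorem funk_parabola_stmt16 (y₀ f₀ g₀ x y s σ₄ A B C D Ybar : ℝ)
    (hy₀ : -1 < y₀ ∧ y₀ < 1) (hF : ‖pt f₀ g₀‖ < 1) (hP : ‖pt x y‖ < 1)
    (hyy : y ≠ y₀) (hne : pt x y ≠ pt f₀ g₀)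
    (hs : s = Real.sign (y₀ - y)) (hY : Ybar = 1 + s * y) (hσ : σ₄ = 1 + s * y₀)
    (hA : A = -2 * σ₄ * g₀ * s) (hB : B = -2 * σ₄ * f₀)
    (hC : C = 2 * σ₄ * (1 + s * g₀)) (hD : D = σ₄ ^ 2 * (f₀ ^ 2 + g₀ ^ 2 - 1)) :
    Real.log (rho y₀ y) = funkDist (pt x y) (pt f₀ g₀) ↔
      Ybar ^ 4 + x ^ 2 * Ybar ^ 2 - 2 * Ybar ^ 3 + A * Ybar ^ 2 + B * x * Ybar
        + C * Ybar + D = 0 := by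
  obtain ⟨hy₀l, hy₀r⟩ := hy₀
  have hys : y₀ - y ≠ 0 := sub_ne_zero.mpr (Ne.symm hyy)
  have hs1 : s = 1 ∨ s = -1 := by
    rcases lt_or_gt_of_ne hys with h | h
    · right; rw [hs, Real.sign_of_neg h]
    · left; rw [hs, Real.sign_of_pos h]
  have hsyy : 0 < s * (y₀ - y) := by
    rcases lt_or_gt_of_ne hys with h | h
    · rw [hs, Real.sign_of_neg h]; nlinarith
    · rw [hs, Real.sign_of_pos h]; nlinarith
  have hPn : x ^ 2 + y ^ 2 < 1 := by
    have h1 : ‖pt x y‖ ^ 2 < 1 := by nlinarith [norm_nonneg (pt x y)]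
    rwa [pt_norm_sq] at h1
  have hFn : f₀ ^ 2 + g₀ ^ 2 < 1 := by
    have h1 : ‖pt f₀ g₀‖ ^ 2 < 1 := by nlinarith [norm_nonneg (pt f₀ g₀)]
    rwa [pt_norm_sq] at h1
  have hYpos : 0 < Ybar := by
    rcases hs1 with h | h <;> rw [hY, h] <;> nlinarith
  have hσY : Ybar < σ₄ := by rw [hY, hσ]; nlinarith
  have hmpos : 0 < (f₀ - x) ^ 2 + (g₀ - y) ^ 2 := by
    rcases eq_or_ne f₀ x with hx | hx
    · have hgy : g₀ - y ≠ 0 := by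
        intro hgg
        exact hne (by rw [hx, show g₀ = y by linarith])
      have := sq_pos_of_ne_zero hgy
      nlinarith [sq_nonneg (f₀ - x)]
    · have := sq_pos_of_ne_zero (sub_ne_zero.mpr hx)
      nlinarith [sq_nonneg (g₀ - y)]
  have hrho : rho y₀ y = σ₄ / Ybar := by
    simp only [rho]; rw [← hs, hσ, hY]
  have hut : f₀ * (f₀ - x) + g₀ * (g₀ - y)
      = (x * (f₀ - x) + y * (g₀ - y)) + ((f₀ - x) ^ 2 + (g₀ - y) ^ 2) := by ring
  have hfd : funkDist (pt x y) (pt f₀ g₀) =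
      Real.log ((Real.sqrt ((x * (f₀ - x) + y * (g₀ - y)) ^ 2
          + (1 - (x ^ 2 + y ^ 2)) * ((f₀ - x) ^ 2 + (g₀ - y) ^ 2))
          - (x * (f₀ - x) + y * (g₀ - y))) /
        (Real.sqrt ((x * (f₀ - x) + y * (g₀ - y)) ^ 2
          + (1 - (x ^ 2 + y ^ 2)) * ((f₀ - x) ^ 2 + (g₀ - y) ^ 2))
          - ((x * (f₀ - x) + y * (g₀ - y)) + ((f₀ - x) ^ 2 + (g₀ - y) ^ 2)))) := by
    simp only [funkDist, pt_sub, pt_inner, pt_norm_sq]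
    rw [hut]
  rw [hrho, hfd]
  apply funk_core _ _ _ _ _ _ hYpos hσY hmpos
  · have hid : ((x * (f₀ - x) + y * (g₀ - y)) ^ 2
        + (1 - (x ^ 2 + y ^ 2)) * ((f₀ - x) ^ 2 + (g₀ - y) ^ 2))
        - (x * (f₀ - x) + y * (g₀ - y)) ^ 2
        = (1 - (x ^ 2 + y ^ 2)) * ((f₀ - x) ^ 2 + (g₀ - y) ^ 2) := by ring
    rw [hid]
    exact mul_pos (by linarith) hmpos
  · have hid : ((x * (f₀ - x) + y * (g₀ - y)) ^ 2
        + (1 - (x ^ 2 + y ^ 2)) * ((f₀ - x) ^ 2 + (g₀ - y) ^ 2))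
        - ((x * (f₀ - x) + y * (g₀ - y)) + ((f₀ - x) ^ 2 + (g₀ - y) ^ 2)) ^ 2
        = (1 - (f₀ ^ 2 + g₀ ^ 2)) * ((f₀ - x) ^ 2 + (g₀ - y) ^ 2) := by ring
    rw [hid]
    exact mul_pos (by linarith) hmpos
  · subst hY hσ hA hB hC hD
    rcases hs1 with h | h <;> subst h <;> ring
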